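/- Let E = {1, 2, 3, …} and let P be the Markov kernel with P(i,·) = (1/2)·δ₁ + (1/2)·δ_{i+1} for every i ≥ 1. Fix ε > 0 and define g : E → ℝ by g(i) = 0 if i lies in some interval [2^k, 2^k + 2^{k−1}) with k ≥ 1 or i = 1, and g(i) = 2(log 2 + ε) if i lies in some interval [2^k + 2^{k−1}, 2^{k+1}) with k ≥ 1. Then P satisfies the mixing condition (A.1) with Λ = 1/2, yet there exist no bounded w : E → ℝ and λ ∈ ℝ satisfying the multiplicative Poisson equation w(x) = g(x) − λ + log ∫_E e^{w(y)} P(x,dy) for all x ∈ E. -/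

import Mathlib

open MeasureTheory ProbabilityTheory

instance : MeasurableSpace ℕ+ := ⊤

instance : MeasurableSingletonClass ℕ+ := ⟨fun _ => MeasurableSpace.measurableSet_top⟩

private def IsHigh (i : ℕ) : Prop := ∃ k : ℕ, 1 ≤ k ∧ 2^k + 2^(k-1) ≤ i ∧ i < 2^(k+1)

private lemma isHigh_log {i : ℕ} (h : IsHigh i) :
    1 ≤ Nat.log 2 i ∧ 2^(Nat.log 2 i) + 2^(Nat.log 2 i - 1) ≤ i ∧ i < 2^(Nat.log 2 i + 1) := by
  obtain ⟨k, hk1, hk2, hk3⟩ := h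
  have hki : 2^k ≤ i := le_trans (Nat.le_add_right _ _) hk2
  have hlog : Nat.log 2 i = k := Nat.log_eq_of_pow_le_of_lt_pow hki hk3
  rw [hlog]; exact ⟨hk1, hk2, hk3⟩

private lemma low_or_high (i : ℕ) (hi : 1 ≤ i) :
    (i = 1 ∨ ∃ k : ℕ, 1 ≤ k ∧ 2^k ≤ i ∧ i < 2^k + 2^(k-1)) ∨ IsHigh i := by
  rcases eq_or_lt_of_le hi with h | h
  · exact Or.inl (Or.inl h.symm)
  · set k := Nat.log 2 i with hk
    have hk1 : 1 ≤ k := Nat.log_pos (by norm_num) h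
    have h1 : 2^k ≤ i := Nat.pow_log_le_self 2 (by omega)
    have h2 : i < 2^(k+1) := Nat.lt_pow_succ_log_self (by norm_num) i
    by_cases hc : i < 2^k + 2^(k-1)
    · exact Or.inl (Or.inr ⟨k, hk1, h1, hc⟩)
    · exact Or.inr ⟨k, hk1, by omega, h2⟩

private lemma card_high_le (j : ℕ) [DecidablePred IsHigh] :
    2 * ((Finset.Icc 1 j).filter (fun i => IsHigh i)).card ≤ j := by
  classical
  set H := (Finset.Icc 1 j).filter (fun i => IsHigh i) with hH
  set Lo := (Finset.Icc 1 j) \ H with hLo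
  have hmem : ∀ i ∈ H, IsHigh i ∧ 1 ≤ i ∧ i ≤ j := by
    intro i hi
    simp only [hH, Finset.mem_filter, Finset.mem_Icc] at hi
    exact ⟨hi.2, hi.1.1, hi.1.2⟩
  have hmaps : ∀ i ∈ H, i - 2^(Nat.log 2 i - 1) ∈ Lo := by
    intro i hi
    obtain ⟨hhi, hi1, hij⟩ := hmem i hi
    obtain ⟨hk1, hk2, hk3⟩ := isHigh_log hhi
    set k := Nat.log 2 i with hk
    have hpow : 2^k = 2^(k-1) * 2 := by
      rw [← pow_succ]; congr 1; omega
    have hpow2 : 2^(k+1) = 2^k * 2 := by rw [pow_succ]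
    have hfl : 2^k ≤ i - 2^(k-1) := by omega
    have hfu : i - 2^(k-1) < 2^k + 2^(k-1) := by omega
    have hflog : Nat.log 2 (i - 2^(k-1)) = k :=
      Nat.log_eq_of_pow_le_of_lt_pow hfl (by omega)
    simp only [hLo, Finset.mem_sdiff, hH, Finset.mem_filter, Finset.mem_Icc]
    constructor
    · constructor
      · omega
      · omega
    · intro hcon
      obtain ⟨-, hc2, -⟩ := isHigh_log hcon.2
      rw [hflog] at hc2
      omega
  have hinj : ∀ i ∈ H, ∀ i' ∈ H, i - 2^(Nat.log 2 i - 1) = i' - 2^(Nat.log 2 i' - 1) → i = i' := by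
    intro i hi i' hi' heq
    obtain ⟨hhi, hi1, hij⟩ := hmem i hi
    obtain ⟨hhi', hi1', hij'⟩ := hmem i' hi'
    obtain ⟨hk1, hk2, hk3⟩ := isHigh_log hhi
    obtain ⟨hk1', hk2', hk3'⟩ := isHigh_log hhi'
    set k := Nat.log 2 i with hk
    set k' := Nat.log 2 i' with hk'
    have hpow : 2^k = 2^(k-1) * 2 := by rw [← pow_succ]; congr 1; omega
    have hpow2 : 2^(k+1) = 2^k * 2 := by rw [pow_succ]
    have hpow' : 2^k' = 2^(k'-1) * 2 := by rw [← pow_succ]; congr 1; omega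
    have hpow2' : 2^(k'+1) = 2^k' * 2 := by rw [pow_succ]
    have hflog : Nat.log 2 (i - 2^(k-1)) = k :=
      Nat.log_eq_of_pow_le_of_lt_pow (by omega) (by omega)
    have hflog' : Nat.log 2 (i' - 2^(k'-1)) = k' :=
      Nat.log_eq_of_pow_le_of_lt_pow (by omega) (by omega)
    have hkk : k = k' := by rw [← hflog, ← hflog', heq]
    have e1 : 2^(k-1) ≤ i := by omega
    have e1' : 2^(k'-1) ≤ i' := by omega
    rw [← hkk] at heq e1'
    omega
  have hcard : H.card ≤ Lo.card := Finset.card_le_card_of_injOn _ hmaps hinj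
  have h1 : Lo.card = (Finset.Icc 1 j).card - H.card :=
    Finset.card_sdiff_of_subset (Finset.filter_subset _ _)
  have h2 : H.card ≤ (Finset.Icc 1 j).card := Finset.card_le_card (Finset.filter_subset _ _)
  have h3 : (Finset.Icc 1 j).card = j := by simp
  omega

/-- On `E = {1, 2, 3, …}`, let `P(i,·) = (1/2) δ₁ + (1/2) δ_{i+1}` for every `i ≥ 1`, and,
for a fixed `ε > 0`, let `g(i) = 0` if `i = 1` or `i ∈ [2^k, 2^k + 2^{k-1})` for some
`k ≥ 1`, and `g(i) = 2(log 2 + ε)` if `i ∈ [2^k + 2^{k-1}, 2^{k+1})` for some `k ≥ 1`.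
Then `P` satisfies the mixing condition (A.1) with `Λ = 1/2`, yet no bounded MPE solution
for `g` exists. -/
theorem no_bounded_mpe_full_support_example
    (P : Kernel ℕ+ ℕ+) [IsMarkovKernel P]
    (hP : ∀ i : ℕ+,
      P i = ((1 : ENNReal) / 2) • Measure.dirac 1 + ((1 : ENNReal) / 2) • Measure.dirac (i + 1))
    (ε : ℝ) (hε : 0 < ε)
    (g : ℕ+ → ℝ)
    (hg_zero : ∀ i : ℕ+,
      (i = 1 ∨ ∃ k : ℕ, 1 ≤ k ∧ 2 ^ k ≤ (i : ℕ) ∧ (i : ℕ) < 2 ^ k + 2 ^ (k - 1)) →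
      g i = 0)
    (hg_high : ∀ i : ℕ+,
      (∃ k : ℕ, 1 ≤ k ∧ 2 ^ k + 2 ^ (k - 1) ≤ (i : ℕ) ∧ (i : ℕ) < 2 ^ (k + 1)) →
      g i = 2 * (Real.log 2 + ε)) :
    (∀ B : Set ℕ+, ∀ x x' : ℕ+, |(P x B).toReal - (P x' B).toReal| ≤ 1 / 2) ∧
    ¬ ∃ (w : ℕ+ → ℝ) (lam : ℝ), (∃ C : ℝ, ∀ x, |w x| ≤ C) ∧
        ∀ x : ℕ+, w x = g x - lam + Real.log (∫ y, Real.exp (w y) ∂(P x)) := by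
  classical
  constructor
  · -- mixing condition
    intro B x x'
    have hB : MeasurableSet B := MeasurableSpace.measurableSet_top
    have key : ∀ y : ℕ+, (P y B).toReal
        = (if (1:ℕ+) ∈ B then (1:ℝ)/2 else 0) + (if y+1 ∈ B then (1:ℝ)/2 else 0) := by
      intro y
      rw [hP y, Measure.add_apply, Measure.smul_apply, Measure.smul_apply,
          Measure.dirac_apply' _ hB, Measure.dirac_apply' _ hB]
      by_cases h1 : (1:ℕ+) ∈ B <;> by_cases h2 : y+1 ∈ B <;>
        simp [Set.indicator, h1, h2] <;> norm_num [ENNReal.toReal_add]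
    rw [key x, key x']
    by_cases h1 : (1:ℕ+) ∈ B <;> by_cases h2 : x+1 ∈ B <;> by_cases h3 : x'+1 ∈ B <;>
      simp [h1, h2, h3] <;> norm_num [abs_le]
  · -- no bounded MPE solution
    rintro ⟨w, lam, ⟨C, hC⟩, hmpe⟩
    have hmeas : Measurable (fun y : ℕ+ => Real.exp (w y)) :=
      fun s _ => MeasurableSpace.measurableSet_top
    have hid : ∀ a : ℕ+, Integrable (fun y => Real.exp (w y)) (Measure.dirac a) := by
      intro a
      refine ⟨hmeas.aestronglyMeasurable, ?_⟩
      simp [HasFiniteIntegral, lintegral_dirac]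
    have hint : ∀ x : ℕ+, ∫ y, Real.exp (w y) ∂(P x)
        = (Real.exp (w 1) + Real.exp (w (x+1))) / 2 := by
      intro x
      rw [hP x, integral_add_measure ((hid 1).smul_measure (by norm_num))
          ((hid (x+1)).smul_measure (by norm_num)),
        integral_smul_measure, integral_smul_measure, integral_dirac, integral_dirac]
      have h12 : ((1:ENNReal)/2).toReal = (1:ℝ)/2 := by norm_num
      rw [h12]
      simp only [smul_eq_mul]
      ring
    set L : ℝ := Real.log 2 + ε with hLdef
    have hlog2 : (0:ℝ) < Real.log 2 := Real.log_pos (by norm_num)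
    have hL0 : 0 < L := by positivity
    set st : ℕ → ℕ+ := fun m => ⟨m+1, Nat.succ_pos m⟩ with hst
    have hst1 : st 0 = 1 := rfl
    have hstsucc : ∀ m : ℕ, st m + 1 = st (m+1) := fun m => rfl
    have hstcoe : ∀ m : ℕ, ((st m : ℕ+) : ℕ) = m + 1 := fun m => rfl
    set v : ℕ → ℝ := fun m => Real.exp (w (st m)) with hv
    have hv_pos : ∀ m, 0 < v m := fun m => Real.exp_pos _
    have hv_ub : ∀ m, v m ≤ Real.exp C := fun m => Real.exp_le_exp.2 (abs_le.1 (hC _)).2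
    have hv_lb : ∀ m, Real.exp (-C) ≤ v m := fun m => Real.exp_le_exp.2 (abs_le.1 (hC _)).1
    -- the basic recursion
    have hrec : ∀ m : ℕ, v m = Real.exp (g (st m) - lam) / 2 * (v 0 + v (m+1)) := by
      intro m
      have h := hmpe (st m)
      rw [hint (st m)] at h
      have hpos : 0 < (Real.exp (w 1) + Real.exp (w (st m + 1))) / 2 := by positivity
      have heq : v m
          = Real.exp (g (st m) - lam) * ((Real.exp (w 1) + Real.exp (w (st m + 1))) / 2) := by
        rw [hv]
        simp only
        rw [h, Real.exp_add, Real.exp_log hpos]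
      rw [heq, hstsucc m]
      have h10 : Real.exp (w 1) = v 0 := rfl
      have h11 : Real.exp (w (st (m+1))) = v (m+1) := rfl
      rw [h10, h11]
      ring
    -- g of high states
    have hg_high' : ∀ m : ℕ, IsHigh (m+1) → g (st m) = 2 * L := by
      intro m hm
      exact hg_high (st m) (by rw [hstcoe]; exact hm)
    -- Step 1 : lam ≥ log 2 + 2 ε
    have hlam : Real.log 2 + 2*ε ≤ lam := by
      by_contra hcon
      push_neg at hcon
      set r : ℝ := Real.exp (2*L - lam) / 2 with hr
      have hr1 : 1 < r := by
        rw [hr, lt_div_iff₀ (by norm_num)]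
        have hlt : Real.log 2 < 2*L - lam := by rw [hLdef]; linarith
        calc (1:ℝ) * 2 = Real.exp (Real.log 2) := by rw [Real.exp_log] <;> norm_num
          _ < Real.exp (2*L - lam) := Real.exp_lt_exp.2 hlt
      have chain : ∀ n : ℕ, r ^ n * Real.exp (-C) ≤ Real.exp C := by
        intro n
        set m0 : ℕ := 2^(n+1) + 2^n - 1 with hm0
        have hhigh : ∀ t, t < n → g (st (m0 + t)) = 2*L := by
          intro t ht
          apply hg_high'
          have h1 : t < 2^n := lt_of_lt_of_le ht (Nat.le_of_lt (Nat.lt_two_pow_self (n := n)))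
          have h2 : 1 ≤ 2^n := Nat.one_le_two_pow
          have h3 : 2^(n+1+1) = 2^(n+1) + 2^(n+1) := by ring
          have h4 : (2:ℕ)^(n+1) = 2^n + 2^n := by ring
          have h5 : (n+1) - 1 = n := rfl
          exact ⟨n+1, by omega, by rw [h5, hm0]; omega, by rw [hm0]; omega⟩
        have step : ∀ t, t ≤ n → r ^ t * v (m0 + t) ≤ v m0 := by
          intro t
          induction t with
          | zero => intro _; simp
          | succ t ih =>
            intro htn
            have h1 : r ^ t * v (m0 + t) ≤ v m0 := ih (by omega)
            have h2 : r * v (m0 + t + 1) ≤ v (m0 + t) := by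
              rw [hrec (m0 + t), hhigh t (by omega)]
              have hv0 := hv_pos 0
              have hv1 := hv_pos (m0 + t + 1)
              rw [hr]
              nlinarith [Real.exp_pos (2*L - lam)]
            calc r ^ (t+1) * v (m0 + t + 1) = r ^ t * (r * v (m0 + t + 1)) := by ring
              _ ≤ r ^ t * v (m0 + t) :=
                  mul_le_mul_of_nonneg_left h2 (pow_nonneg (by positivity) t)
              _ ≤ v m0 := h1
        calc r ^ n * Real.exp (-C) ≤ r ^ n * v (m0 + n) :=
              mul_le_mul_of_nonneg_left (hv_lb _) (pow_nonneg (by positivity) n)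
          _ ≤ v m0 := step n le_rfl
          _ ≤ Real.exp C := hv_ub _
      obtain ⟨n, hn⟩ := pow_unbounded_of_one_lt (Real.exp C * Real.exp C) hr1
      have hEC := Real.exp_pos (-C)
      have hmul : Real.exp C * Real.exp C * Real.exp (-C) < r ^ n * Real.exp (-C) :=
        mul_lt_mul_of_pos_right hn hEC
      have hCC : Real.exp C * Real.exp C * Real.exp (-C) = Real.exp C := by
        rw [mul_assoc, ← Real.exp_add]
        simp
      linarith [chain n]
    -- Step 2: product unfolding
    set ρ : ℕ → ℝ := fun m => Real.exp (g (st m) - lam) / 2 with hρ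
    have hρ_pos : ∀ m, 0 < ρ m := fun m => by rw [hρ]; positivity
    set Pd : ℕ → ℝ := fun N => ∏ i ∈ Finset.range N, ρ i with hPdd
    have hPd_pos : ∀ N, 0 < Pd N := fun N => Finset.prod_pos (fun i _ => hρ_pos i)
    have unfold : ∀ N : ℕ, v 0 = v 0 * (∑ j ∈ Finset.range N, Pd (j+1)) + Pd N * v N := by
      intro N
      induction N with
      | zero => simp [hPdd]
      | succ N ih =>
        have hPsucc : Pd (N+1) = Pd N * ρ N := by
          rw [hPdd]; simp only; rw [Finset.prod_range_succ]
        have hvN : v N = ρ N * (v 0 + v (N+1)) := hrec N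
        calc v 0 = v 0 * (∑ j ∈ Finset.range N, Pd (j+1)) + Pd N * v N := ih
          _ = v 0 * (∑ j ∈ Finset.range N, Pd (j+1)) + Pd N * (ρ N * (v 0 + v (N+1))) := by
              rw [← hvN]
          _ = v 0 * ((∑ j ∈ Finset.range N, Pd (j+1)) + Pd (N+1)) + Pd (N+1) * v (N+1) := by
              rw [hPsucc]; ring
          _ = v 0 * (∑ j ∈ Finset.range (N+1), Pd (j+1)) + Pd (N+1) * v (N+1) := by
              rw [Finset.sum_range_succ]
    -- Step 3: sum of g bound
    have hsum_g : ∀ N : ℕ, ∑ i ∈ Finset.range N, g (st i) ≤ L * N := by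
      intro N
      have hterm : ∀ i : ℕ, g (st i) = if IsHigh (i+1) then 2*L else 0 := by
        intro i
        by_cases h : IsHigh (i+1)
        · rw [if_pos h]; exact hg_high' i h
        · rw [if_neg h]
          rcases low_or_high (i+1) (Nat.le_add_left 1 i) with hl | hh
          · apply hg_zero
            rcases hl with hl | hl
            · left; apply PNat.coe_injective; rw [hstcoe, hl]; rfl
            · right; rw [hstcoe]; exact hl
          · exact absurd hh h
      rw [Finset.sum_congr rfl (fun i _ => hterm i), ← Finset.sum_filter]
      rw [Finset.sum_const, nsmul_eq_mul]
      have hcard : ((Finset.range N).filter (fun i => IsHigh (i+1))).card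
          ≤ ((Finset.Icc 1 N).filter (fun i => IsHigh i)).card := by
        apply Finset.card_le_card_of_injOn (fun i => i + 1)
        · intro i hi
          simp only [Finset.coe_filter, Finset.mem_coe, Set.mem_setOf_eq, Finset.mem_filter, Finset.mem_range] at hi
          simp only [Finset.coe_filter, Finset.mem_coe, Set.mem_setOf_eq, Finset.mem_filter, Finset.mem_Icc]
          exact ⟨⟨by omega, by omega⟩, hi.2⟩
        · intro a _ b _ h2; simp only at h2; omega
      have h2N := card_high_le N
      have hcardR : (((Finset.range N).filter (fun i => IsHigh (i+1))).card : ℝ) * 2 ≤ (N:ℝ) := by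
        exact_mod_cast by omega
      nlinarith [hL0]
    -- Step 4: Pd is dominated by a geometric sequence
    set c : ℝ := Real.exp (-ε) / 2 with hcdef
    have hc0 : 0 < c := by rw [hcdef]; positivity
    have hc2 : c < 1/2 := by
      rw [hcdef]
      have h1 : Real.exp (-ε) < 1 := Real.exp_lt_one_iff.2 (by linarith)
      linarith
    have hc1 : c < 1 := by linarith
    have hPd_le : ∀ N : ℕ, Pd N ≤ c ^ N := by
      intro N
      have h1 : Pd N = Real.exp ((∑ i ∈ Finset.range N, g (st i)) - N * lam) / 2 ^ N := by
        rw [hPdd]; simp only [hρ]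
        rw [Finset.prod_div_distrib, ← Real.exp_sum, Finset.prod_const, Finset.card_range]
        congr 1
        rw [Finset.sum_sub_distrib, Finset.sum_const, Finset.card_range, nsmul_eq_mul]
      have h2 : (∑ i ∈ Finset.range N, g (st i)) - N * lam ≤ (N:ℝ) * (-ε) := by
        have ha := hsum_g N
        have hb : (N:ℝ) * (Real.log 2 + 2*ε) ≤ (N:ℝ) * lam :=
          mul_le_mul_of_nonneg_left hlam (Nat.cast_nonneg N)
        rw [hLdef] at ha
        nlinarith
      have h3 : c ^ N = Real.exp ((N:ℝ) * (-ε)) / 2 ^ N := by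
        rw [hcdef, div_pow, Real.exp_nat_mul]
      rw [h1, h3]
      apply div_le_div_of_nonneg_right ?_ ?_
      · exact Real.exp_le_exp.2 h2
      · positivity
    -- Step 5: geometric sum bound
    have hgeom : ∀ N : ℕ, ∑ j ∈ Finset.range N, Pd (j+1) ≤ c / (1 - c) := by
      intro N
      have h1 : ∑ j ∈ Finset.range N, Pd (j+1) ≤ ∑ j ∈ Finset.range N, c^(j+1) :=
        Finset.sum_le_sum fun j _ => hPd_le (j+1)
      have h2 : ∑ j ∈ Finset.range N, c^(j+1) = c * ∑ j ∈ Finset.range N, c^j := by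
        rw [Finset.mul_sum]
        exact Finset.sum_congr rfl fun j _ => by ring
      have h1c : (0:ℝ) < 1 - c := by linarith
      have h3 : ∑ j ∈ Finset.range N, c^j ≤ 1 / (1-c) := by
        have hform : ∑ j ∈ Finset.range N, c^j = (1 - c^N)/(1-c) := by
          rw [geom_sum_eq (by linarith : c ≠ 1) N, div_eq_div_iff (by linarith) (by linarith)]
          ring
        rw [hform, div_le_div_iff₀ h1c h1c]
        have := pow_nonneg hc0.le N
        nlinarith
      have h4 : c * ∑ j ∈ Finset.range N, c^j ≤ c * (1/(1-c)) :=
        mul_le_mul_of_nonneg_left h3 hc0.le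
      have h5 : c * (1/(1-c)) = c/(1-c) := by ring
      linarith
    -- Step 6: contradiction
    set d : ℝ := 1 - c/(1-c) with hddef
    have h1c : (0:ℝ) < 1 - c := by linarith
    have hd : 0 < d := by
      rw [hddef, sub_pos, div_lt_one h1c]
      linarith
    obtain ⟨N, hN⟩ := exists_pow_lt_of_lt_one
      (show 0 < Real.exp (-C) * d / Real.exp C by positivity) hc1
    have hu := unfold N
    have hS := hgeom N
    have key1 : Real.exp (-C) * d ≤ v 0 * (1 - ∑ j ∈ Finset.range N, Pd (j+1)) := by
      have hle : d ≤ 1 - ∑ j ∈ Finset.range N, Pd (j+1) := by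
        rw [hddef]; linarith
      calc Real.exp (-C) * d ≤ v 0 * d := mul_le_mul_of_nonneg_right (hv_lb 0) hd.le
        _ ≤ v 0 * (1 - ∑ j ∈ Finset.range N, Pd (j+1)) :=
            mul_le_mul_of_nonneg_left hle (hv_pos 0).le
    have key2 : v 0 * (1 - ∑ j ∈ Finset.range N, Pd (j+1)) = Pd N * v N := by
      have hexp : v 0 * (1 - ∑ j ∈ Finset.range N, Pd (j+1))
          = v 0 - v 0 * ∑ j ∈ Finset.range N, Pd (j+1) := by ring
      rw [hexp]
      linarith
    have key3 : Pd N * v N ≤ c^N * Real.exp C :=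
      mul_le_mul (hPd_le N) (hv_ub N) (hv_pos N).le (pow_nonneg hc0.le N)
    rw [lt_div_iff₀ (Real.exp_pos C)] at hN
    linarith
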